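/- Let n ≥ 2 be an integer, let x ∈ ℝⁿ with x ≠ 0, and let r > 0. Then ∫_{S^{n−1}} e^{i r ⟨x,ω⟩} dσ(ω) = (2π)^{n/2} (r|x|)^{1 − n/2} J_{n/2 − 1}(r|x|), where σ is the surface measure on the unit sphere S^{n−1} ⊂ ℝⁿ. -/

import Mathlib

open MeasureTheory Real Filter
open Set Metric

lemma int_Ioi_rpow_exp {q : ℝ} (hq : -1 < q) :
    ∫ t in Ioi (0:ℝ), t ^ q * rexp (-t ^ 2) = (1/2) * Real.Gamma ((q+1)/2) := by
  have h := integral_rpow_mul_exp_neg_rpow (p := 2) (q := q) two_pos hq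
  rw [← h]
  refine setIntegral_congr_fun measurableSet_Ioi (fun t ht => ?_)
  rw [show t ^ (2:ℝ) = t ^ (2:ℕ) from Real.rpow_natCast t 2]

lemma int_Ioi_pow_exp (k : ℕ) :
    ∫ t in Ioi (0:ℝ), t ^ k * rexp (-t ^ 2) = (1/2) * Real.Gamma ((k+1)/2) := by
  have h := int_Ioi_rpow_exp (q := (k:ℝ)) (lt_of_lt_of_le (by norm_num) (Nat.cast_nonneg k))
  rw [← h]
  refine setIntegral_congr_fun measurableSet_Ioi (fun t ht => ?_)
  rw [Real.rpow_natCast]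

lemma gauss_even (m : ℕ) :
    ∫ t : ℝ, t ^ (2*m) * rexp (-t ^ 2) = Real.Gamma (m + 1/2) := by
  have heq : ∀ t : ℝ, t ^ (2*m) * rexp (-t ^ 2)
      = (fun s : ℝ => s ^ (2*m) * rexp (-s ^ 2)) |t| := by
    intro t
    simp [abs_pow, pow_mul, sq_abs]
  calc ∫ t : ℝ, t ^ (2*m) * rexp (-t ^ 2)
      = ∫ t : ℝ, (fun s : ℝ => s ^ (2*m) * rexp (-s ^ 2)) |t| := by
        exact integral_congr_ae (Filter.Eventually.of_forall heq)
    _ = 2 * ∫ t in Ioi (0:ℝ), t ^ (2*m) * rexp (-t ^ 2) :=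
        integral_comp_abs (f := fun s : ℝ => s ^ (2*m) * rexp (-s ^ 2))
    _ = Real.Gamma (m + 1/2) := by
        rw [int_Ioi_pow_exp]
        rw [show ((2*m : ℕ) + 1 : ℝ)/2 = m + 1/2 by push_cast; ring]
        ring

lemma gauss_odd (m : ℕ) :
    ∫ t : ℝ, t ^ (2*m+1) * rexp (-t ^ 2) = 0 := by
  have h := (Measure.measurePreserving_neg (volume : Measure ℝ)).integral_comp
    (Homeomorph.neg ℝ).measurableEmbedding (fun t : ℝ => t ^ (2*m+1) * rexp (-t ^ 2))
  have h2 : ∫ t : ℝ, (-t) ^ (2*m+1) * rexp (-(-t) ^ 2)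
      = - ∫ t : ℝ, t ^ (2*m+1) * rexp (-t ^ 2) := by
    rw [← integral_neg]
    congr 1; ext t
    rw [Odd.neg_pow ⟨m, by ring⟩, neg_sq]
    ring
  have := h.symm.trans h2
  linarith

lemma gauss_moment (n k : ℕ) (hn : 0 < n) (u : EuclideanSpace ℝ (Fin n)) (hu : ‖u‖ = 1) :
    ∫ x : EuclideanSpace ℝ (Fin n), (inner ℝ u x : ℝ) ^ k * rexp (-‖x‖ ^ 2)
      = (∫ t : ℝ, t ^ k * rexp (-t ^ 2)) * (√π) ^ (n-1) := by
  classical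
  set i0 : Fin n := ⟨0, hn⟩
  -- orthonormal basis with b i0 = u
  have hcard : Module.finrank ℝ (EuclideanSpace ℝ (Fin n)) = Fintype.card (Fin n) := by
    simp [finrank_euclideanSpace_fin]
  have horth : Orthonormal ℝ (({i0} : Set (Fin n)).restrict (fun _ => u)) := by
    constructor
    · intro i; simpa [Set.restrict] using hu
    · intro i j hij
      exact absurd (Subtype.ext (i.2.trans j.2.symm)) hij
  obtain ⟨b, hb⟩ := horth.exists_orthonormalBasis_extension_of_card_eq hcard
  have hbu : b i0 = u := hb i0 rfl
  have hinner : ∀ x : EuclideanSpace ℝ (Fin n), (inner ℝ u x : ℝ) = b.repr x i0 := by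
    intro x; rw [b.repr_apply_apply, hbu]
  have hnorm : ∀ x : EuclideanSpace ℝ (Fin n), ‖x‖ = ‖b.repr x‖ := fun x =>
    (b.repr.norm_map x).symm
  set F : EuclideanSpace ℝ (Fin n) → ℝ := fun y => (y i0) ^ k * rexp (-‖y‖ ^ 2) with hF
  have h1 : ∫ x : EuclideanSpace ℝ (Fin n), (inner ℝ u x : ℝ) ^ k * rexp (-‖x‖ ^ 2)
      = ∫ y : EuclideanSpace ℝ (Fin n), F y := by
    rw [← b.measurePreserving_repr.integral_comp
      b.repr.toHomeomorph.measurableEmbedding F]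
    congr 1; ext x
    simp only [F, LinearIsometryEquiv.coe_toHomeomorph]
    rw [hinner, hnorm]
  rw [h1]
  -- transfer to Pi measure
  have h2 : ∫ y : EuclideanSpace ℝ (Fin n), F y
      = ∫ y : Fin n → ℝ, ∏ i, (y i) ^ (if i = i0 then k else 0) * rexp (-(y i) ^ 2) := by
    rw [← ((EuclideanSpace.volume_preserving_symm_measurableEquiv_toLp (Fin n)).symm _).integral_comp
      (MeasurableEquiv.toLp 2 (Fin n → ℝ)).symm.symm.measurableEmbedding F]
    congr 1; ext y
    have hy : ∀ i, ((MeasurableEquiv.toLp 2 (Fin n → ℝ)).symm.symm y) i = y i := fun _ => rfl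
    have hnorm2 : ‖(MeasurableEquiv.toLp 2 (Fin n → ℝ)).symm.symm y‖ ^ 2 = ∑ i, (y i) ^ 2 := by
      rw [EuclideanSpace.norm_eq]
      rw [Real.sq_sqrt (by positivity)]
      simp [hy]
    simp only [F, hy, hnorm2]
    rw [Finset.prod_mul_distrib]
    congr 1
    · have he : ∀ i : Fin n, (y i) ^ (if i = i0 then k else 0)
          = if i = i0 then (y i) ^ k else 1 := by
        intro i; split <;> simp
      simp_rw [he]
      rw [Finset.prod_ite_eq' Finset.univ i0 (fun i => (y i) ^ k)]
      simp
    · rw [← Real.exp_sum, ← Finset.sum_neg_distrib]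
  rw [h2, MeasureTheory.integral_fintype_prod_volume_eq_prod
    (f := fun i (t : ℝ) => t ^ (if i = i0 then k else 0) * rexp (-t ^ 2))]
  have hval : ∀ i : Fin n, (∫ t : ℝ, t ^ (if i = i0 then k else 0) * rexp (-t ^ 2))
      = if i = i0 then (∫ t : ℝ, t ^ k * rexp (-t ^ 2)) else √π := by
    intro i
    split
    · rfl
    · have := integral_gaussian 1
      simp only [neg_mul, one_mul] at this
      simp [this]
  simp_rw [hval]
  rw [← Finset.mul_prod_erase Finset.univ _ (Finset.mem_univ i0)]
  simp only [if_pos rfl]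
  congr 1
  rw [Finset.prod_congr rfl (fun i hi => if_neg (Finset.mem_erase.1 hi).1),
    Finset.prod_const, Finset.card_erase_of_mem (Finset.mem_univ i0), Finset.card_univ,
    Fintype.card_fin]

lemma sphere_moment (n k : ℕ) (hn : 2 ≤ n) (u : EuclideanSpace ℝ (Fin n)) (hu : ‖u‖ = 1) :
    (∫ ω : sphere (0 : EuclideanSpace ℝ (Fin n)) 1,
        (inner ℝ u (ω : EuclideanSpace ℝ (Fin n)) : ℝ) ^ k
        ∂((volume : Measure (EuclideanSpace ℝ (Fin n))).toSphere))
      * ((1/2) * Real.Gamma (((k:ℝ) + n)/2))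
    = (∫ t : ℝ, t ^ k * rexp (-t ^ 2)) * (√π) ^ (n-1) := by
  haveI hE : Nontrivial (EuclideanSpace ℝ (Fin n)) := by
    refine nontrivial_of_ne u 0 (fun h => ?_)
    rw [h] at hu; simp at hu
  have hdim : Module.finrank ℝ (EuclideanSpace ℝ (Fin n)) = n := finrank_euclideanSpace_fin
  set g : sphere (0 : (EuclideanSpace ℝ (Fin n))) 1 → ℝ := fun ω => (inner ℝ u (ω : (EuclideanSpace ℝ (Fin n))) : ℝ) ^ k with hg
  set h : Ioi (0:ℝ) → ℝ := fun t => (t:ℝ) ^ k * rexp (-(t:ℝ) ^ 2) with hh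
  have key : ∫ x : (EuclideanSpace ℝ (Fin n)), (inner ℝ u x : ℝ) ^ k * rexp (-‖x‖ ^ 2)
      = (∫ ω, g ω ∂(volume : Measure (EuclideanSpace ℝ (Fin n))).toSphere)
        * ∫ t : Ioi (0:ℝ), h t ∂(Measure.volumeIoiPow (Module.finrank ℝ (EuclideanSpace ℝ (Fin n)) - 1)) := by
    calc ∫ x : (EuclideanSpace ℝ (Fin n)), (inner ℝ u x : ℝ) ^ k * rexp (-‖x‖ ^ 2)
        = ∫ x : ({(0:(EuclideanSpace ℝ (Fin n)))}ᶜ : Set (EuclideanSpace ℝ (Fin n))), (inner ℝ u (x:(EuclideanSpace ℝ (Fin n))) : ℝ) ^ k * rexp (-‖(x:(EuclideanSpace ℝ (Fin n)))‖ ^ 2)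
            ∂((volume : Measure (EuclideanSpace ℝ (Fin n))).comap (↑)) := by
          rw [integral_subtype_comap (measurableSet_singleton _).compl
            (fun x => (inner ℝ u x : ℝ) ^ k * rexp (-‖x‖ ^ 2)),
            restrict_compl_singleton]
      _ = ∫ p : sphere (0:(EuclideanSpace ℝ (Fin n))) 1 × Ioi (0:ℝ), g p.1 * h p.2
            ∂((volume : Measure (EuclideanSpace ℝ (Fin n))).toSphere.prod
              (Measure.volumeIoiPow (Module.finrank ℝ (EuclideanSpace ℝ (Fin n)) - 1))) := by
          rw [← (volume : Measure (EuclideanSpace ℝ (Fin n))).measurePreserving_homeomorphUnitSphereProd.integral_comp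
            (Homeomorph.measurableEmbedding _) (fun p => g p.1 * h p.2)]
          congr 1; ext x
          have hx : (x : (EuclideanSpace ℝ (Fin n))) ≠ 0 := x.2
          have hnx : ‖(x:(EuclideanSpace ℝ (Fin n)))‖ ≠ 0 := norm_ne_zero_iff.2 hx
          simp only [g, h, homeomorphUnitSphereProd_apply_fst_coe,
            homeomorphUnitSphereProd_apply_snd_coe]
          rw [real_inner_smul_right, mul_pow]
          have h1 : (‖(x:(EuclideanSpace ℝ (Fin n)))‖⁻¹)^k * ‖(x:(EuclideanSpace ℝ (Fin n)))‖^k = 1 := by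
            rw [← mul_pow, inv_mul_cancel₀ hnx, one_pow]
          have h2 : (‖(x:(EuclideanSpace ℝ (Fin n)))‖⁻¹)^k * (inner ℝ u (x:(EuclideanSpace ℝ (Fin n))) : ℝ)^k
              * (‖(x:(EuclideanSpace ℝ (Fin n)))‖^k * rexp (-‖(x:(EuclideanSpace ℝ (Fin n)))‖^2))
              = ((‖(x:(EuclideanSpace ℝ (Fin n)))‖⁻¹)^k * ‖(x:(EuclideanSpace ℝ (Fin n)))‖^k)
                * ((inner ℝ u (x:(EuclideanSpace ℝ (Fin n))) : ℝ)^k * rexp (-‖(x:(EuclideanSpace ℝ (Fin n)))‖^2)) := by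
            ring
          rw [h2, h1, one_mul]
      _ = (∫ ω, g ω ∂(volume : Measure (EuclideanSpace ℝ (Fin n))).toSphere)
            * ∫ t : Ioi (0:ℝ), h t ∂(Measure.volumeIoiPow (Module.finrank ℝ (EuclideanSpace ℝ (Fin n)) - 1)) :=
          integral_prod_mul g h
  have hIoi : ∫ t : Ioi (0:ℝ), h t ∂(Measure.volumeIoiPow (Module.finrank ℝ (EuclideanSpace ℝ (Fin n)) - 1))
      = (1/2) * Real.Gamma (((k:ℝ) + n)/2) := by
    simp only [Measure.volumeIoiPow, ENNReal.ofReal, hdim]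
    rw [integral_withDensity_eq_integral_smul
      ((measurable_subtype_coe.pow_const _).real_toNNReal) h,
      integral_subtype_comap measurableSet_Ioi
        (fun a : ℝ => Real.toNNReal (a ^ (n-1)) • (a ^ k * rexp (-a ^ 2)))]
    rw [setIntegral_congr_fun measurableSet_Ioi
      (g := fun a : ℝ => a ^ (k + (n-1)) * rexp (-a ^ 2)) (fun a ha => ?_)]
    · rw [int_Ioi_pow_exp]
      congr 1
      have h1n : (1:ℕ) ≤ n := by omega
      push_cast [Nat.cast_sub h1n]
      ring_nf
    · rw [NNReal.smul_def, Real.coe_toNNReal _ (pow_nonneg (le_of_lt ha) _)]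
      simp only [smul_eq_mul]
      ring
  rw [hIoi] at key
  exact key.symm.trans (gauss_moment n k (by omega) u hu)

lemma sphere_exp_series (n : ℕ) (hn : 2 ≤ n) (u : EuclideanSpace ℝ (Fin n)) (hu : ‖u‖ = 1)
    (s : ℝ) (hs : 0 < s) :
    ∫ ω : sphere (0 : EuclideanSpace ℝ (Fin n)) 1,
        Complex.exp (Complex.I * ((s * (inner ℝ u (ω : EuclideanSpace ℝ (Fin n))) : ℝ) : ℂ))
        ∂((volume : Measure (EuclideanSpace ℝ (Fin n))).toSphere)
    = ∑' k : ℕ, (Complex.I * s) ^ k / (Nat.factorial k : ℂ) *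
        (((∫ ω : sphere (0 : EuclideanSpace ℝ (Fin n)) 1,
          (inner ℝ u (ω : EuclideanSpace ℝ (Fin n)) : ℝ) ^ k
          ∂((volume : Measure (EuclideanSpace ℝ (Fin n))).toSphere)) : ℝ) : ℂ) := by
  set σ := (volume : Measure (EuclideanSpace ℝ (Fin n))).toSphere with hσ
  set c : sphere (0 : EuclideanSpace ℝ (Fin n)) 1 → ℝ :=
    fun ω => (inner ℝ u (ω : EuclideanSpace ℝ (Fin n)) : ℝ) with hc
  have hcont : Continuous c := Continuous.inner continuous_const continuous_subtype_val
  have hexp : ∀ z : ℂ, Complex.exp z = ∑' k : ℕ, z ^ k / (Nat.factorial k : ℂ) := by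
    intro z
    rw [Complex.exp_eq_exp_ℂ, NormedSpace.exp_eq_tsum_div]
  have hpt : ∀ ω, Complex.exp (Complex.I * ((s * c ω : ℝ) : ℂ))
      = ∑' k : ℕ, (Complex.I * s * (c ω : ℂ)) ^ k / (Nat.factorial k : ℂ) := by
    intro ω
    rw [hexp]
    congr 1; ext k
    congr 1
    push_cast
    ring
  simp only [show ∀ ω : sphere (0 : EuclideanSpace ℝ (Fin n)) 1, Complex.exp (Complex.I * ((s * inner ℝ u (ω : EuclideanSpace ℝ (Fin n)) : ℝ) : ℂ)) = ∑' k : ℕ, (Complex.I * s * (c ω : ℂ)) ^ k / (Nat.factorial k : ℂ) from hpt]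
  have hbound : ∀ k : ℕ, ∀ ω, ‖(Complex.I * s * (c ω : ℂ)) ^ k / (Nat.factorial k : ℂ)‖
      ≤ s ^ k / (Nat.factorial k : ℝ) := by
    intro k ω
    have hc1 : |c ω| ≤ 1 := by
      have h1 := abs_real_inner_le_norm u (ω : EuclideanSpace ℝ (Fin n))
      have h2 : ‖(ω : EuclideanSpace ℝ (Fin n))‖ = 1 :=
        mem_sphere_zero_iff_norm.1 ω.2
      rw [hu, h2, one_mul] at h1
      exact h1
    rw [norm_div, norm_pow]
    have hle : ‖Complex.I * s * (c ω : ℂ)‖ ≤ s := by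
      rw [norm_mul, norm_mul, Complex.norm_I, one_mul, Complex.norm_real, Complex.norm_real]
      rw [Real.norm_eq_abs, Real.norm_eq_abs, abs_of_pos hs]
      calc s * |c ω| ≤ s * 1 := mul_le_mul_of_nonneg_left hc1 hs.le
        _ = s := mul_one s
    have h2 : ‖(Nat.factorial k : ℂ)‖ = (Nat.factorial k : ℝ) := Complex.norm_natCast _
    rw [h2]
    have hfact : (0:ℝ) < (Nat.factorial k : ℝ) := by positivity
    exact div_le_div_of_nonneg_right (pow_le_pow_left₀ (norm_nonneg _) hle k) hfact.le
  have hmeas : ∀ k : ℕ, AEStronglyMeasurable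
      (fun ω => (Complex.I * s * (c ω : ℂ)) ^ k / (Nat.factorial k : ℂ)) σ := by
    intro k
    exact (((continuous_const.mul (Complex.continuous_ofReal.comp hcont)).pow k).div_const
      _).aestronglyMeasurable
  have hne : (∑' k : ℕ, ∫⁻ ω, ‖(Complex.I * s * (c ω : ℂ)) ^ k / (Nat.factorial k : ℂ)‖₊ ∂σ) ≠ ⊤ := by
    have hb : ∀ k : ℕ, (∫⁻ ω, ‖(Complex.I * s * (c ω : ℂ)) ^ k / (Nat.factorial k : ℂ)‖₊ ∂σ)
        ≤ ENNReal.ofReal (s ^ k / (Nat.factorial k : ℝ)) * σ Set.univ := by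
      intro k
      calc (∫⁻ ω, ‖(Complex.I * s * (c ω : ℂ)) ^ k / (Nat.factorial k : ℂ)‖₊ ∂σ)
          ≤ ∫⁻ _, ENNReal.ofReal (s ^ k / (Nat.factorial k : ℝ)) ∂σ := by
            refine lintegral_mono (fun ω => ?_)
            rw [← enorm_eq_nnnorm, ← ofReal_norm]
            exact ENNReal.ofReal_le_ofReal (hbound k ω)
        _ = ENNReal.ofReal (s ^ k / (Nat.factorial k : ℝ)) * σ Set.univ := by
            rw [lintegral_const]
    refine ne_top_of_le_ne_top ?_ (ENNReal.tsum_le_tsum hb)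
    rw [ENNReal.tsum_mul_right,
      ← ENNReal.ofReal_tsum_of_nonneg (fun k => by positivity) (Real.summable_pow_div_factorial s)]
    exact ENNReal.mul_ne_top ENNReal.ofReal_ne_top (measure_ne_top σ _)
  rw [integral_tsum hmeas hne]
  congr 1; ext k
  have hsplit : ∀ ω, (Complex.I * s * (c ω : ℂ)) ^ k / (Nat.factorial k : ℂ)
      = ((Complex.I * s) ^ k / (Nat.factorial k : ℂ)) * (((c ω) ^ k : ℝ) : ℂ) := by
    intro ω
    push_cast
    rw [mul_pow]
    ring
  simp_rw [hsplit]
  rw [integral_const_mul]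
  congr 1
  exact integral_ofReal

lemma term_id (n m : ℕ) (hn : 2 ≤ n) {s : ℝ} (hs : 0 < s) :
    (-1:ℝ)^m * s^(2*m) / ((2*m).factorial : ℝ)
      * (2 * Real.Gamma (m + 1/2) * (√π)^(n-1) / Real.Gamma ((2*(m:ℝ)+n)/2))
    = (2*π)^((n:ℝ)/2) * s^(1-(n:ℝ)/2) *
      ((-1:ℝ)^m * s^(((n:ℝ)/2-1) + 2*(m:ℝ)) /
        (2^(((n:ℝ)/2-1) + 2*(m:ℝ)) * (m.factorial:ℝ) * Real.Gamma (((n:ℝ)/2-1) + (m:ℝ) + 1))) := by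
  have hπ : (0:ℝ) < π := pi_pos
  have hsπ : (0:ℝ) < √π := Real.sqrt_pos.2 hπ
  -- Gamma argument identity
  have hGarg : ((n:ℝ)/2-1) + (m:ℝ) + 1 = (2*(m:ℝ)+n)/2 := by ring
  rw [hGarg]
  have hG : (0:ℝ) < Real.Gamma ((2*(m:ℝ)+n)/2) := by
    apply Real.Gamma_pos_of_pos
    have h0 : 0 < n := by omega
    have : (0:ℝ) < (n:ℝ) := by exact_mod_cast h0
    positivity
  -- duplication formula
  have hdup := Real.Gamma_mul_Gamma_add_half ((m:ℝ) + 1/2)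
  rw [show ((m:ℝ) + 1/2) + 1/2 = (m:ℝ) + 1 by ring, Real.Gamma_nat_eq_factorial m,
    show (2:ℝ) * ((m:ℝ) + 1/2) = ((2*m : ℕ):ℝ) + 1 by push_cast; ring,
    Real.Gamma_nat_eq_factorial (2*m),
    show (1:ℝ) - (((2*m : ℕ):ℝ) + 1) = -((2*m : ℕ):ℝ) by push_cast; ring,
    Real.rpow_neg (by norm_num : (0:ℝ) ≤ 2), Real.rpow_natCast] at hdup
  -- hdup : Γ(m+1/2) * m! = (2m)! * (2^(2m))⁻¹ * √π
  -- split rpow exponents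
  have hsplit_s : s ^ (((n:ℝ)/2-1) + 2*(m:ℝ)) = s ^ ((n:ℝ)/2-1) * s ^ (2*m) := by
    rw [show (2*(m:ℝ)) = ((2*m : ℕ):ℝ) by push_cast; ring, Real.rpow_add hs,
      Real.rpow_natCast]
  have hsplit_2 : (2:ℝ) ^ (((n:ℝ)/2-1) + 2*(m:ℝ)) = (2:ℝ) ^ ((n:ℝ)/2-1) * 2 ^ (2*m) := by
    rw [show (2*(m:ℝ)) = ((2*m : ℕ):ℝ) by push_cast; ring,
      Real.rpow_add (by norm_num : (0:ℝ) < 2), Real.rpow_natCast]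
  have h2pi : (2*π) ^ ((n:ℝ)/2) = ((2:ℝ) ^ ((n:ℝ)/2-1) * 2) * ((√π)^(n-1) * √π) := by
    rw [Real.mul_rpow (by norm_num) hπ.le]
    congr 1
    · have h21 : (2:ℝ)^((n:ℝ)/2) = 2^(((n:ℝ)/2-1)+(1:ℝ)) := by norm_num
      rw [h21, Real.rpow_add (by norm_num : (0:ℝ) < 2), Real.rpow_one]
    · rw [Real.sqrt_eq_rpow, ← Real.rpow_natCast (π ^ ((1:ℝ)/2)) (n-1), ← Real.rpow_mul hπ.le,
        ← Real.rpow_add hπ]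
      congr 1
      have : ((n-1 : ℕ):ℝ) = (n:ℝ) - 1 := by
        rw [Nat.cast_sub (by omega)]; norm_num
      rw [this]; ring
  have hsinv : s ^ ((1:ℝ)-(n:ℝ)/2) * s ^ ((n:ℝ)/2-1) = 1 := by
    rw [← Real.rpow_add hs, show (1:ℝ)-(n:ℝ)/2 + ((n:ℝ)/2-1) = 0 by ring, Real.rpow_zero]
  -- now pure algebra
  have hm : (0:ℝ) < (m.factorial : ℝ) := by positivity
  have h2m : (0:ℝ) < ((2*m).factorial : ℝ) := by positivity
  have hb : (0:ℝ) < (2:ℝ) ^ ((n:ℝ)/2-1) := Real.rpow_pos_of_pos (by norm_num) _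
  have h4 : (0:ℝ) < (2:ℝ) ^ (2*m) := by positivity
  have hΓhalf : Real.Gamma ((m:ℝ) + 1/2) = ((2*m).factorial : ℝ) * ((2:ℝ)^(2*m))⁻¹ * √π
      / (m.factorial : ℝ) := by
    field_simp at hdup ⊢
    linarith [hdup]
  have hsν : (0:ℝ) < s ^ ((n:ℝ)/2-1) := Real.rpow_pos_of_pos hs _
  have hs2 : s ^ ((1:ℝ)-(n:ℝ)/2) = (s ^ ((n:ℝ)/2-1))⁻¹ := by
    field_simp
    rw [← hsinv]; ring
  rw [hsplit_s, hsplit_2, h2pi, hΓhalf, hs2]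
  field_simp

noncomputable def besselJ (ν t : ℝ) : ℝ :=
  ∑' r : ℕ, (-1 : ℝ) ^ r * t ^ (ν + 2 * (r : ℝ)) /
    ((2 : ℝ) ^ (ν + 2 * (r : ℝ)) * (Nat.factorial r : ℝ) * Real.Gamma (ν + (r : ℝ) + 1))

/-- The integral of `e^{ir⟨x,ω⟩}` over the unit sphere `S^{n-1}` (with its surface
measure) equals `(2π)^{n/2} (r|x|)^{1-n/2} J_{n/2-1}(r|x|)`. -/
theorem integral_sphere_exp_inner (n : ℕ) (hn : 2 ≤ n) (x : EuclideanSpace ℝ (Fin n))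
    (hx : x ≠ 0) (r : ℝ) (hr : 0 < r) :
    ∫ ω : Metric.sphere (0 : EuclideanSpace ℝ (Fin n)) 1,
        Complex.exp (Complex.I * ((r * (inner ℝ x (ω : EuclideanSpace ℝ (Fin n))) : ℝ) : ℂ))
        ∂((volume : Measure (EuclideanSpace ℝ (Fin n))).toSphere)
      = (((2 * Real.pi) ^ ((n : ℝ) / 2) * (r * ‖x‖) ^ (1 - (n : ℝ) / 2) *
          besselJ ((n : ℝ) / 2 - 1) (r * ‖x‖) : ℝ) : ℂ) := by
  have hxn : ‖x‖ ≠ 0 := norm_ne_zero_iff.2 hx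
  set u : EuclideanSpace ℝ (Fin n) := ‖x‖⁻¹ • x with hudef
  have hu : ‖u‖ = 1 := by
    rw [hudef, norm_smul, norm_inv, norm_norm, inv_mul_cancel₀ hxn]
  set s : ℝ := r * ‖x‖ with hsdef
  have hs : 0 < s := mul_pos hr (norm_pos_iff.2 hx)
  set σ := (volume : Measure (EuclideanSpace ℝ (Fin n))).toSphere with hσ
  -- rewrite the integrand
  have hinner : ∀ ω : sphere (0 : EuclideanSpace ℝ (Fin n)) 1,
      (r * (inner ℝ x (ω : EuclideanSpace ℝ (Fin n))) : ℝ)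
        = s * (inner ℝ u (ω : EuclideanSpace ℝ (Fin n)) : ℝ) := by
    intro ω
    rw [hudef, real_inner_smul_left, hsdef]
    field_simp
  simp_rw [hinner]
  rw [sphere_exp_series n hn u hu s hs]
  -- moments
  set I : ℕ → ℝ := fun k => ∫ ω : sphere (0 : EuclideanSpace ℝ (Fin n)) 1,
    (inner ℝ u (ω : EuclideanSpace ℝ (Fin n)) : ℝ) ^ k ∂σ with hI
  have hσfin : σ Set.univ ≠ ⊤ := measure_ne_top σ _
  have hIbound : ∀ k, |I k| ≤ (σ Set.univ).toReal := by
    intro k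
    have : ‖I k‖ ≤ 1 * (σ Set.univ).toReal := by
      refine norm_integral_le_of_norm_le_const (Filter.Eventually.of_forall (fun ω => ?_))
      have h2 : ‖(ω : EuclideanSpace ℝ (Fin n))‖ = 1 := mem_sphere_zero_iff_norm.1 ω.2
      have h1 := abs_real_inner_le_norm u (ω : EuclideanSpace ℝ (Fin n))
      rw [hu, h2, one_mul] at h1
      rw [Real.norm_eq_abs, abs_pow]
      calc |inner ℝ u (ω : EuclideanSpace ℝ (Fin n))| ^ k ≤ 1 ^ k :=
            pow_le_pow_left₀ (abs_nonneg _) h1 k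
        _ = 1 := one_pow k
    rwa [Real.norm_eq_abs, one_mul] at this
  have hGpos : ∀ k : ℕ, 0 < (1/2) * Real.Gamma (((k:ℝ) + n)/2) := by
    intro k
    have h0 : (0:ℝ) < (n:ℝ) := by
      have : 0 < n := by omega
      exact_mod_cast this
    have : (0:ℝ) < ((k:ℝ) + n)/2 := by positivity
    have := Real.Gamma_pos_of_pos this
    linarith
  have hodd : ∀ m : ℕ, I (2*m+1) = 0 := by
    intro m
    have h := sphere_moment n (2*m+1) hn u hu
    rw [gauss_odd m, zero_mul] at h
    have := hGpos (2*m+1)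
    have h2 : I (2*m+1) * ((1/2) * Real.Gamma ((((2*m+1:ℕ):ℝ) + n)/2)) = 0 := h
    rcases mul_eq_zero.1 h2 with h3 | h3
    · exact h3
    · exact absurd h3 (ne_of_gt (by exact_mod_cast hGpos (2*m+1)))
  have heven : ∀ m : ℕ, I (2*m)
      = 2 * Real.Gamma (m + 1/2) * (√π)^(n-1) / Real.Gamma ((2*(m:ℝ)+n)/2) := by
    intro m
    have h := sphere_moment n (2*m) hn u hu
    rw [gauss_even m] at h
    have hg := hGpos (2*m)
    have hcast : (((2*m:ℕ):ℝ) + n)/2 = (2*(m:ℝ)+n)/2 := by push_cast; ring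
    rw [hcast] at h hg
    rw [← hσ] at h
    rw [show (∫ ω : sphere (0 : EuclideanSpace ℝ (Fin n)) 1,
      (inner ℝ u (ω : EuclideanSpace ℝ (Fin n)) : ℝ) ^ (2*m) ∂σ) = I (2*m) from rfl] at h
    have hGne : Real.Gamma ((2*(m:ℝ)+n)/2) ≠ 0 := by
      intro h0; rw [h0] at hg; norm_num at hg
    rw [eq_div_iff hGne]
    linear_combination 2 * h
  -- define the complex series terms
  set f : ℕ → ℂ := fun k => (Complex.I * s) ^ k / (Nat.factorial k : ℂ) * ((I k : ℝ) : ℂ)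
    with hf
  -- real version
  set g : ℕ → ℝ := fun k => s ^ k / (Nat.factorial k : ℝ) * I k with hg2
  have hfg : ∀ m : ℕ, f (2*m) = (((-1:ℝ)^m * s^(2*m) / ((2*m).factorial : ℝ) * I (2*m) : ℝ) : ℂ) := by
    intro m
    rw [hf]
    have : (Complex.I * s) ^ (2*m) = (((-1:ℝ)^m * s^(2*m) : ℝ) : ℂ) := by
      rw [pow_mul, mul_pow, Complex.I_sq]
      push_cast
      ring
    simp only [this]
    push_cast
    ring
  have hfodd : ∀ m : ℕ, f (2*m+1) = 0 := by
    intro m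
    rw [hf]
    simp [hodd m]
  -- summability
  have hsummax : Summable (fun k : ℕ => s ^ k / (Nat.factorial k : ℝ) * (σ Set.univ).toReal) :=
    (Real.summable_pow_div_factorial s).mul_right _
  have hfnorm : ∀ k : ℕ, ‖f k‖ ≤ s ^ k / (Nat.factorial k : ℝ) * (σ Set.univ).toReal := by
    intro k
    rw [hf]
    simp only []
    rw [norm_mul, norm_div, norm_pow, norm_mul, Complex.norm_I, one_mul, Complex.norm_real,
      Complex.norm_real, Complex.norm_natCast, Real.norm_eq_abs, Real.norm_eq_abs,
      abs_of_pos hs]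
    have h1 : s ^ k / (Nat.factorial k : ℝ) ≥ 0 := by positivity
    exact mul_le_mul_of_nonneg_left (hIbound k) h1
  have hfsum : Summable f := by
    refine Summable.of_norm (Summable.of_nonneg_of_le (fun k => norm_nonneg _) hfnorm hsummax)
  have hfsume : Summable (fun m : ℕ => f (2*m)) :=
    hfsum.comp_injective (fun a b h => by omega)
  have hfsumo : Summable (fun m : ℕ => f (2*m+1)) :=
    hfsum.comp_injective (fun a b h => by omega)
  rw [← tsum_even_add_odd hfsume hfsumo]
  simp_rw [hfodd]
  rw [tsum_zero, add_zero]
  simp_rw [hfg, heven]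
  rw [← Complex.ofReal_tsum]
  congr 1
  -- now a real identity
  rw [besselJ, ← tsum_mul_left]
  exact tsum_congr (fun m => term_id n m hn hs)
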